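/- Let T be a rooted binary tree with root r, and suppose DP satisfies the invariant DP[v][k] = max{f : ∃ L ⊆ leaves(T_v), |L| ≤ k, maxflow in (T_v)_{L,τ,f} = n_v·τ + f}. Then the minimum budget k* for which there exists L ⊆ leaves(T), |L| ≤ k*, with maxflow n·τ in T_{L,τ} equals the smallest k with DP[r][k] ≥ 0. -/

import Mathlib

open Finset
open scoped ENNReal

/-- Weight of the (directed) cut leaving `S` in a graph with capacities `c`. -/
noncomputable def treeCutE {V : Type*} [Fintype V] [DecidableEq V] (c : V → V → ℝ≥0∞)
    (S : Finset V) : ℝ≥0∞ :=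
  ∑ u ∈ S, ∑ v ∈ Sᶜ, c u v

/-- `λ(A,B)`: minimum weight of a cut separating `A` from `B`. -/
noncomputable def lamE {V : Type*} [Fintype V] [DecidableEq V] (c : V → V → ℝ≥0∞)
    (A B : Finset V) : ℝ≥0∞ :=
  ⨅ S ∈ {S : Finset V | A ⊆ S ∧ Disjoint S B}, treeCutE c S

/-- Rooted binary trees with vertex labels in `V` and edge weights to the children. -/
inductive WBT (V : Type*) : Type _ where
  | leaf (v : V) : WBT V
  | node (v : V) (wl wr : ℝ≥0∞) (l r : WBT V) : WBT V

namespace WBT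

variable {V : Type*}

/-- The root vertex. -/
def root : WBT V → V
  | leaf v => v
  | node v _ _ _ _ => v

/-- The list of all vertex labels. -/
def vertList : WBT V → List V
  | leaf v => [v]
  | node v _ _ l r => v :: (l.vertList ++ r.vertList)

/-- The list of leaf labels. -/
def leafList : WBT V → List V
  | leaf v => [v]
  | node _ _ _ l r => l.leafList ++ r.leafList

/-- The set of leaves. -/
def leaves [DecidableEq V] (t : WBT V) : Finset V := t.leafList.toFinset

/-- The (symmetric) edge-weight function of the tree. -/
noncomputable def w [DecidableEq V] : WBT V → V → V → ℝ≥0∞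
  | leaf _, _, _ => 0
  | node v wl wr l r, a, b =>
      (if (a = v ∧ b = l.root) ∨ (a = l.root ∧ b = v) then wl else 0) +
      (if (a = v ∧ b = r.root) ∨ (a = r.root ∧ b = v) then wr else 0) +
      l.w a b + r.w a b

end WBT

/-- Capacities of the injected-flow gadget `(T_v)_{L,τ,f}` for the subtree `t`:
the tree edges, a source `s = Sum.inr true` with capacity-`τ` edges to every leaf of `t`
together with a directed injected-flow edge `(s, root t)` of capacity `f` (reversed, of
capacity `-f`, if `f < 0`), and a sink `t = Sum.inr false` with infinite-capacity edges from
every vertex of `L`. -/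
noncomputable def gadgetW {V : Type*} [DecidableEq V] (t : WBT V) (L : Finset V)
    (τ f : ℝ) : (V ⊕ Bool) → (V ⊕ Bool) → ℝ≥0∞
  | Sum.inl u, Sum.inl v => t.w u v
  | Sum.inr true, Sum.inl v =>
      (if v ∈ t.leaves then ENNReal.ofReal τ else 0) +
      (if v = t.root then ENNReal.ofReal f else 0)
  | Sum.inl v, Sum.inr true =>
      (if v ∈ t.leaves then ENNReal.ofReal τ else 0) +
      (if v = t.root then ENNReal.ofReal (-f) else 0)
  | Sum.inl v, Sum.inr false => if v ∈ L then ⊤ else 0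
  | Sum.inr _, Sum.inr _ => 0
  | Sum.inr false, Sum.inl _ => 0

/-- The minimum `s`-`t` cut (= maximum `s`-`t` flow) value of `(T_v)_{L,τ,f}`. -/
noncomputable def gadgetCut {V : Type*} [Fintype V] [DecidableEq V] (t : WBT V)
    (L : Finset V) (τ f : ℝ) : ℝ≥0∞ :=
  lamE (gadgetW t L τ f) {Sum.inr true} {Sum.inr false}

/-- The dynamic-programming value `DP[t][k]`: the supremum (maximum) of all injectable flows
`f` such that some `L ⊆ leaves(t)` with `|L| ≤ k` makes the max `s`-`t` flow in
`(T_t)_{L,τ,f}` equal to `n_t·τ + f`.  It is `⊥ = -∞` if no such `f` exists and `⊤ = ∞` if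
arbitrarily large `f` are feasible. -/
noncomputable def DP {V : Type*} [Fintype V] [DecidableEq V] (t : WBT V) (τ : ℝ)
    (k : ℕ) : EReal :=
  sSup (Real.toEReal '' {f : ℝ | ∃ L : Finset V, L ⊆ t.leaves ∧ L.card ≤ k ∧
    gadgetCut t L τ f = ENNReal.ofReal ((t.leaves.card : ℝ) * τ + f)})
set_option linter.unusedSectionVars false
section Aux
variable {V : Type*} [Fintype V] [DecidableEq V]

lemma gadgetW_decomp (t : WBT V) (L : Finset V) (τ f : ℝ) (u v : V ⊕ Bool) :
    gadgetW t L τ f u v = gadgetW t L τ 0 u v +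
      (if u = Sum.inr true ∧ v = Sum.inl t.root then ENNReal.ofReal f else 0) +
      (if u = Sum.inl t.root ∧ v = Sum.inr true then ENNReal.ofReal (-f) else 0) := by
  rcases u with u | (_|_) <;> rcases v with v | (_|_) <;>
    simp [gadgetW] <;> split_ifs <;> simp_all

lemma sum_pair {α : Type*} [DecidableEq α] (S T : Finset α) (a b : α) (x : ℝ≥0∞) :
    ∑ u ∈ S, ∑ v ∈ T, (if u = a ∧ v = b then x else 0)
      = if a ∈ S ∧ b ∈ T then x else 0 := by
  simp only [ite_and]
  rw [Finset.sum_comm]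
  simp [Finset.sum_ite_eq' T b, Finset.sum_ite_eq' S a]

lemma treeCutE_decomp (t : WBT V) (L : Finset V) (τ f : ℝ) (S : Finset (V ⊕ Bool)) :
    treeCutE (gadgetW t L τ f) S = treeCutE (gadgetW t L τ 0) S +
      (if Sum.inr true ∈ S ∧ Sum.inl t.root ∈ Sᶜ then ENNReal.ofReal f else 0) +
      (if Sum.inl t.root ∈ S ∧ Sum.inr true ∈ Sᶜ then ENNReal.ofReal (-f) else 0) := by
  unfold treeCutE
  have h : ∀ u ∈ S, ∀ v ∈ Sᶜ, gadgetW t L τ f u v = gadgetW t L τ 0 u v +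
      (if u = Sum.inr true ∧ v = Sum.inl t.root then ENNReal.ofReal f else 0) +
      (if u = Sum.inl t.root ∧ v = Sum.inr true then ENNReal.ofReal (-f) else 0) :=
    fun u _ v _ => gadgetW_decomp t L τ f u v
  rw [Finset.sum_congr rfl (fun u hu => Finset.sum_congr rfl (fun v hv => h u hu v hv))]
  simp only [Finset.sum_add_distrib]
  rw [sum_pair S Sᶜ (Sum.inr true) (Sum.inl t.root),
    sum_pair S Sᶜ (Sum.inl t.root) (Sum.inr true)]

end Aux

section Aux2
variable {V : Type*} [Fintype V] [DecidableEq V]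

lemma treeCutE_source (t : WBT V) (L : Finset V) (τ : ℝ) (hτ : 0 ≤ τ) :
    treeCutE (gadgetW t L τ 0) {Sum.inr true} = ENNReal.ofReal ((t.leaves.card : ℝ) * τ) := by
  unfold treeCutE
  rw [Finset.sum_singleton]
  have h0 : gadgetW t L τ 0 (Sum.inr true) (Sum.inr true) = 0 := by simp [gadgetW]
  have hcompl : ∑ v ∈ ({Sum.inr true} : Finset (V ⊕ Bool))ᶜ, gadgetW t L τ 0 (Sum.inr true) v
      = ∑ v, gadgetW t L τ 0 (Sum.inr true) v := by
    rw [← Finset.sum_compl_add_sum ({Sum.inr true} : Finset (V ⊕ Bool))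
      (gadgetW t L τ 0 (Sum.inr true))]
    simp [h0]
  rw [hcompl, Fintype.sum_sum_type]
  have h1 : ∀ v : V, gadgetW t L τ 0 (Sum.inr true) (Sum.inl v)
      = if v ∈ t.leaves then ENNReal.ofReal τ else 0 := by
    intro v; simp [gadgetW]
  have h2 : ∀ b : Bool, gadgetW t L τ 0 (Sum.inr true) (Sum.inr b) = 0 := by
    intro b; cases b <;> simp [gadgetW]
  simp only [h1, h2, Finset.sum_const_zero, add_zero]
  rw [Finset.sum_ite_mem, Finset.univ_inter, Finset.sum_const, nsmul_eq_mul,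
    ENNReal.ofReal_mul (by positivity), ENNReal.ofReal_natCast]

lemma gadgetCut_zero_le (t : WBT V) (L : Finset V) (τ : ℝ) (hτ : 0 ≤ τ) :
    gadgetCut t L τ 0 ≤ ENNReal.ofReal ((t.leaves.card : ℝ) * τ) := by
  rw [← treeCutE_source t L τ hτ]
  exact biInf_le _ (by simp : ({Sum.inr true} : Finset (V ⊕ Bool)) ∈
    {S : Finset (V ⊕ Bool) | {Sum.inr true} ⊆ S ∧ Disjoint S {Sum.inr false}})

end Aux2
section Aux3
variable {V : Type*} [Fintype V] [DecidableEq V]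

lemma gadgetCut_zero_lower (t : WBT V) (L : Finset V) (τ f : ℝ) (hτ : 0 ≤ τ)
    (hfeas : gadgetCut t L τ f = ENNReal.ofReal ((t.leaves.card : ℝ) * τ + f)) :
    ENNReal.ofReal ((t.leaves.card : ℝ) * τ + min f 0) ≤ gadgetCut t L τ 0 := by
  set n : ℝ := (t.leaves.card : ℝ) with hn
  have hn0 : 0 ≤ n * τ := by positivity
  unfold gadgetCut lamE
  refine le_iInf₂ fun S hS => ?_
  have hS' : {Sum.inr true} ⊆ S ∧ Disjoint S {Sum.inr false} := hS
  have hsrc : (Sum.inr true : V ⊕ Bool) ∈ S := hS'.1 (Finset.mem_singleton_self _)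
  have hle : ENNReal.ofReal (n * τ + f) ≤ treeCutE (gadgetW t L τ f) S := by
    rw [← hfeas]
    exact biInf_le _ hS
  rw [treeCutE_decomp] at hle
  have hT2 : (if Sum.inl t.root ∈ S ∧ Sum.inr true ∈ Sᶜ then ENNReal.ofReal (-f) else 0) = 0 := by
    simp [Finset.mem_compl, hsrc]
  rw [hT2, add_zero] at hle
  by_cases hroot : Sum.inl t.root ∈ S
  · have hT1 : (if Sum.inr true ∈ S ∧ Sum.inl t.root ∈ Sᶜ then ENNReal.ofReal f else 0) = 0 := by
      simp [Finset.mem_compl, hroot]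
    rw [hT1, add_zero] at hle
    exact le_trans (ENNReal.ofReal_le_ofReal (by linarith [min_le_left f 0])) hle
  · have hT1 : (if Sum.inr true ∈ S ∧ Sum.inl t.root ∈ Sᶜ then ENNReal.ofReal f else 0)
        = ENNReal.ofReal f := by
      simp [Finset.mem_compl, hroot, hsrc]
    rw [hT1] at hle
    rcases le_total f 0 with hf | hf
    · have : ENNReal.ofReal f = 0 := ENNReal.ofReal_of_nonpos hf
      rw [this, add_zero] at hle
      exact le_trans (ENNReal.ofReal_le_ofReal (by simp [min_eq_left hf])) hle
    · rw [ENNReal.ofReal_add hn0 hf] at hle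
      have := (ENNReal.add_le_add_iff_right (ENNReal.ofReal_ne_top)).mp hle
      exact le_trans (ENNReal.ofReal_le_ofReal (by simp [min_eq_right hf])) this

end Aux3

/-- recovering the optimum of sink selection from the DP.  For a rooted binary
tree `t` with `n` leaves, the minimum budget `k*` for which some `L ⊆ leaves(t)` with
`|L| ≤ k*` achieves max `s`-`t` flow `n·τ` in `T_{L,τ}` (which is the gadget with injected
flow `f = 0`) equals the smallest `k` with `DP[root][k] ≥ 0`. -/
theorem stmt19 {V : Type*} [Fintype V] [DecidableEq V]
    (t : WBT V) (hnd : t.vertList.Nodup) (τ : ℝ) (hτ : 0 ≤ τ) :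
    sInf {k : ℕ | ∃ L : Finset V, L ⊆ t.leaves ∧ L.card ≤ k ∧
        gadgetCut t L τ 0 = ENNReal.ofReal ((t.leaves.card : ℝ) * τ)} =
    sInf {k : ℕ | (0 : EReal) ≤ DP t τ k} := by
  congr 1
  ext k
  simp only [Set.mem_setOf_eq]
  constructor
  · rintro ⟨L, hL1, hL2, heq⟩
    have h0 : (0:ℝ) ∈ {f : ℝ | ∃ L : Finset V, L ⊆ t.leaves ∧ L.card ≤ k ∧
        gadgetCut t L τ f = ENNReal.ofReal ((t.leaves.card : ℝ) * τ + f)} :=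
      ⟨L, hL1, hL2, by rwa [add_zero]⟩
    have : ((0:ℝ) : EReal) ≤ DP t τ k := le_sSup ⟨0, h0, rfl⟩
    simpa using this
  · intro hDP
    set 𝒞 : Finset (Finset V) := t.leaves.powerset.filter (fun L => L.card ≤ k) with h𝒞def
    have h𝒞 : 𝒞.Nonempty := ⟨∅, by simp [h𝒞def]⟩
    set C : ℝ≥0∞ := 𝒞.sup' h𝒞 (fun L => gadgetCut t L τ 0) with hCdef
    have hA : C ≤ ENNReal.ofReal ((t.leaves.card : ℝ) * τ) :=
      Finset.sup'_le _ _ fun L _ => gadgetCut_zero_le t L τ hτ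
    have hB : ENNReal.ofReal ((t.leaves.card : ℝ) * τ) ≤ C := by
      apply ENNReal.le_of_forall_pos_le_add
      intro ε hε _
      have hneg : ((-(ε:ℝ)) : EReal) < DP t τ k := by
        refine lt_of_lt_of_le ?_ hDP
        have h1 : (-(ε:ℝ)) < (0:ℝ) := neg_lt_zero.mpr (by exact_mod_cast hε)
        exact_mod_cast h1
      rw [DP, lt_sSup_iff] at hneg
      obtain ⟨x, ⟨g, hg, rfl⟩, hgt⟩ := hneg
      have hgε : -(ε:ℝ) < g := by exact_mod_cast hgt
      obtain ⟨L, hL1, hL2, hfeas⟩ := hg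
      have hLmem : L ∈ 𝒞 := by
        simp [h𝒞def, Finset.mem_filter, Finset.mem_powerset, hL1, hL2]
      have hlow := gadgetCut_zero_lower t L τ g hτ hfeas
      have hC1 : ENNReal.ofReal ((t.leaves.card : ℝ) * τ + min g 0) ≤ C :=
        le_trans hlow (Finset.le_sup' (fun L => gadgetCut t L τ 0) hLmem)
      calc ENNReal.ofReal ((t.leaves.card : ℝ) * τ)
          ≤ ENNReal.ofReal (((t.leaves.card : ℝ) * τ + min g 0) + (ε:ℝ)) := by
            apply ENNReal.ofReal_le_ofReal
            have : -(ε:ℝ) ≤ min g 0 := le_min hgε.le (neg_nonpos.mpr ε.coe_nonneg)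
            linarith
        _ ≤ ENNReal.ofReal ((t.leaves.card : ℝ) * τ + min g 0) + ENNReal.ofReal (ε:ℝ) :=
            ENNReal.ofReal_add_le
        _ ≤ C + ε := by
            rw [ENNReal.ofReal_coe_nnreal]
            exact add_le_add_left hC1 _
    have hC : C = ENNReal.ofReal ((t.leaves.card : ℝ) * τ) := le_antisymm hA hB
    obtain ⟨L₀, hmem, hL₀⟩ := 𝒞.exists_mem_eq_sup' h𝒞 (fun L => gadgetCut t L τ 0)
    rw [h𝒞def, Finset.mem_filter, Finset.mem_powerset] at hmem
    exact ⟨L₀, hmem.1, hmem.2, by rw [← hL₀, ← hCdef, hC]⟩
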